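/- Additivity characterization: for truth assignments v, u with positive-weight classical parts, p(v ∨' u) = p(v) + p(u) holds if the true-sets are disjoint up to null sets and the indeterminacy sets coincide up to null sets; formally, if c({w : v(w)=1} ∩ {w : u(w)=1}) = 0 and c({w : v(w)=1/2} Δ {w : u(w)=1/2}) = 0, then p(v∨'u) = p(v) + p(u). -/
import Mathlib


/-- The set of trivalent truth values {0, 1/2, 1} inside ℚ. -/
def Tri (x : ℚ) : Prop := x = 0 ∨ x = 1/2 ∨ x = 1

/-- Cooper conditional: f→(0,y)=1/2, f→(1,y)=y, f→(1/2,y)=y (on trivalent values). -/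
def tcond (a b : ℚ) : ℚ := if a = 0 then 1/2 else b

/-- Quasi-conjunction. -/
def tand (a b : ℚ) : ℚ :=
  if a = 0 ∨ b = 0 then 0 else if a = 1 ∨ b = 1 then 1 else 1/2

/-- Quasi-disjunction. -/
def tor (a b : ℚ) : ℚ :=
  if a = 1 ∨ b = 1 then 1 else if a = 0 ∨ b = 0 then 0 else 1/2

/-- Strong Kleene negation. -/
def tneg (a : ℚ) : ℚ := 1 - a

open Finset in
/-- Weight of the worlds where the assignment `v` takes the value `x`. -/
def wt {W : Type*} [Fintype W] (c : W → ℝ) (v : W → ℚ) (x : ℚ) : ℝ :=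
  ∑ w ∈ Finset.univ.filter (fun w => v w = x), c w

/-- Trivalent probability of a truth assignment. -/
noncomputable def pv {W : Type*} [Fintype W] (c : W → ℝ) (v : W → ℚ) : ℝ :=
  if 0 < wt c v 1 + wt c v 0 then wt c v 1 / (wt c v 1 + wt c v 0) else 1

open Finset in
/-- Additivity: if the true-sets are disjoint up to null sets and the indeterminacy
sets coincide up to null sets, then p(v ∨' u) = p(v) + p(u). -/
theorem prob_additivity {W : Type*} [Fintype W] (c : W → ℝ)
    (hc : ∀ w, 0 ≤ c w) (hsum : ∑ w, c w = 1)
    (v u : W → ℚ) (hv : ∀ w, Tri (v w)) (hu : ∀ w, Tri (u w))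
    (hdv : 0 < wt c v 1 + wt c v 0) (hdu : 0 < wt c u 1 + wt c u 0)
    (hdvu : 0 < wt c (fun w => tor (v w) (u w)) 1 + wt c (fun w => tor (v w) (u w)) 0)
    (hdisj : ∑ w ∈ Finset.univ.filter (fun w => v w = 1 ∧ u w = 1), c w = 0)
    (hsym : ∑ w ∈ Finset.univ.filter
      (fun w => (v w = 1/2 ∧ ¬ u w = 1/2) ∨ (u w = 1/2 ∧ ¬ v w = 1/2)), c w = 0) :
    pv c (fun w => tor (v w) (u w)) = pv c v + pv c u := by
  classical
  have hzero : ∀ w, v w = 1 → u w = 1 → c w = 0 := by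
    intro w h1 h2
    exact (Finset.sum_eq_zero_iff_of_nonneg (fun w _ => hc w)).mp hdisj w
      (by simp [h1, h2])
  have h12 : ∀ w, v w = 1/2 → ¬ u w = 1/2 → c w = 0 := by
    intro w h1 h2
    exact (Finset.sum_eq_zero_iff_of_nonneg (fun w _ => hc w)).mp hsym w
      (Finset.mem_filter.mpr ⟨Finset.mem_univ w, Or.inl ⟨h1, h2⟩⟩)
  have h21 : ∀ w, u w = 1/2 → ¬ v w = 1/2 → c w = 0 := by
    intro w h1 h2
    exact (Finset.sum_eq_zero_iff_of_nonneg (fun w _ => hc w)).mp hsym w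
      (Finset.mem_filter.mpr ⟨Finset.mem_univ w, Or.inr ⟨h1, h2⟩⟩)
  have E1 : wt c (fun w => tor (v w) (u w)) 1 = wt c v 1 + wt c u 1 := by
    unfold wt
    rw [Finset.sum_filter, Finset.sum_filter, Finset.sum_filter,
      ← Finset.sum_add_distrib]
    refine Finset.sum_congr rfl (fun w _ => ?_)
    rcases hv w with h1|h1|h1 <;> rcases hu w with h2|h2|h2 <;>
      simp [tor, h1, h2, hzero w, h12 w, h21 w] <;> norm_num
  have E2 : wt c (fun w => tor (v w) (u w)) 1 + wt c (fun w => tor (v w) (u w)) 0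
      = wt c v 1 + wt c v 0 := by
    unfold wt
    rw [Finset.sum_filter, Finset.sum_filter, Finset.sum_filter, Finset.sum_filter,
      ← Finset.sum_add_distrib, ← Finset.sum_add_distrib]
    refine Finset.sum_congr rfl (fun w _ => ?_)
    rcases hv w with h1|h1|h1 <;> rcases hu w with h2|h2|h2 <;>
      simp [tor, h1, h2, hzero w, h12 w, h21 w] <;> norm_num
  have E3 : wt c v 1 + wt c v 0 = wt c u 1 + wt c u 0 := by
    unfold wt
    rw [Finset.sum_filter, Finset.sum_filter, Finset.sum_filter, Finset.sum_filter,
      ← Finset.sum_add_distrib, ← Finset.sum_add_distrib]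
    refine Finset.sum_congr rfl (fun w _ => ?_)
    rcases hv w with h1|h1|h1 <;> rcases hu w with h2|h2|h2 <;>
      simp [h1, h2, hzero w, h12 w, h21 w] <;> norm_num
  rw [pv, pv, pv, if_pos hdvu, if_pos hdv, if_pos hdu, E2, E1, ← E3]
  ring
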